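/- For every integer t ≥ 1, the weighted sum satisfies the lower bound 1/√t ≤ ∑_{i=1}^t α_t^i/√i. -/

import Mathlib

/-- The learning rate `α_t = (H+1)/(H+t)`. -/
noncomputable def lrate (H t : ℕ) : ℝ := (H + 1) / (H + t)

/-- The weight `α_t^i = α_i · ∏_{j=i+1}^t (1 − α_j)`. -/
noncomputable def lrateW (H t i : ℕ) : ℝ :=
  lrate H i * ∏ j ∈ Finset.Icc (i + 1) t, (1 - lrate H j)

lemma lrate_nonneg (H t : ℕ) : 0 ≤ lrate H t := by
  unfold lrate; positivity

lemma lrate_le_one (H t : ℕ) (ht : 1 ≤ t) : lrate H t ≤ 1 := by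
  unfold lrate
  rw [div_le_one (by positivity)]
  have : (1:ℝ) ≤ t := by exact_mod_cast ht
  linarith

lemma lrateW_nonneg (H t i : ℕ) (hi : 1 ≤ i) : 0 ≤ lrateW H t i := by
  unfold lrateW
  apply mul_nonneg (lrate_nonneg H i)
  apply Finset.prod_nonneg
  intro j hj
  have hj1 : 1 ≤ j := by
    have := (Finset.mem_Icc.mp hj).1; omega
  linarith [lrate_le_one H j hj1]

lemma lrateW_sum (H t : ℕ) (ht : 1 ≤ t) :
    ∑ i ∈ Finset.Icc 1 t, lrateW H t i = 1 := by
  induction t with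
  | zero => omega
  | succ n ih =>
    rcases Nat.eq_or_lt_of_le ht with h | h
    · simp [← h, lrateW, lrate]
      have : (H:ℝ) + 1 ≠ 0 := by positivity
      field_simp
      exact this
    · have hn : 1 ≤ n := by omega
      rw [Finset.sum_Icc_succ_top (by omega)]
      have hW : ∀ i ∈ Finset.Icc 1 n,
          lrateW H (n+1) i = lrateW H n i * (1 - lrate H (n+1)) := by
        intro i hi
        have hi2 : i + 1 ≤ n + 1 := by
          have := (Finset.mem_Icc.mp hi).2; omega
        unfold lrateW
        rw [Finset.prod_Icc_succ_top hi2]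
        ring
      rw [Finset.sum_congr rfl hW, ← Finset.sum_mul, ih hn]
      have : lrateW H (n+1) (n+1) = lrate H (n+1) := by
        unfold lrateW
        rw [Finset.Icc_eq_empty (by omega)]
        simp
      rw [this]; ring

theorem stmt_3 (H : ℕ) (hH : 1 ≤ H) (t : ℕ) (ht : 1 ≤ t) :
    1 / Real.sqrt t ≤ ∑ i ∈ Finset.Icc 1 t, lrateW H t i / Real.sqrt i := by
  have key : ∀ i ∈ Finset.Icc 1 t, lrateW H t i / Real.sqrt t ≤ lrateW H t i / Real.sqrt i := by
    intro i hi
    obtain ⟨hi1, hi2⟩ := Finset.mem_Icc.mp hi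
    have h0 : (0:ℝ) < Real.sqrt i := Real.sqrt_pos.mpr (by exact_mod_cast hi1)
    exact div_le_div_of_nonneg_left (lrateW_nonneg H t i hi1) h0
      (Real.sqrt_le_sqrt (by exact_mod_cast hi2))
  calc 1 / Real.sqrt t = (∑ i ∈ Finset.Icc 1 t, lrateW H t i) / Real.sqrt t := by
        rw [lrateW_sum H t ht]
    _ = ∑ i ∈ Finset.Icc 1 t, lrateW H t i / Real.sqrt t := Finset.sum_div _ _ _
    _ ≤ _ := Finset.sum_le_sum key
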